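/- Let G = (A, B, E) be a convex bipartite graph and P = (a_1, ..., a_k) an (A, b, b')-path in G² with a_1 <_A a_k. Then: (i) if k = 2 then N_G(a_1) ∩ N_G(a_2) ⊆ (b, b'), and if k > 2 then N_G(a_j) ⊆ (b, b') for all 2 ≤ j ≤ k−1; (ii) every vertex of the interval [b, b'] in B is adjacent in G to some a_j, 1 ≤ j ≤ k. -/

import Mathlib

/-- The square of a simple graph: two distinct vertices are adjacent iff
their distance in `G` is at most `2`. -/
def SimpleGraph.square {V : Type*} (G : SimpleGraph V) : SimpleGraph V where
  Adj u v := u ≠ v ∧ (G.Adj u v ∨ ∃ w, G.Adj u w ∧ G.Adj w v)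
  symm := ⟨fun u v => by
    rintro ⟨huv, h | ⟨w, h1, h2⟩⟩
    · exact ⟨huv.symm, Or.inl h.symm⟩
    · exact ⟨huv.symm, Or.inr ⟨w, h2.symm, h1.symm⟩⟩⟩
  loopless := ⟨fun v => by simp⟩


/-- `A, B` form a bipartition of the graph `G`: they partition the vertex set and
every edge goes between `A` and `B`. -/
def SimpleGraph.IsBipartitionOf {V : Type*} (G : SimpleGraph V) (A B : Set V) : Prop :=
  (∀ v, v ∈ A ∨ v ∈ B) ∧ Disjoint A B ∧
    ∀ ⦃u v⦄, G.Adj u v → (u ∈ A ∧ v ∈ B) ∨ (u ∈ B ∧ v ∈ A)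

/-- `ordB` is a convexity ordering of the part `B`: it is injective on `B` and for each
`a ∈ A` the neighborhood `N_G(a)` is a consecutive (convex) set with respect to it. -/
def SimpleGraph.IsConvexityOrder {V : Type*} (G : SimpleGraph V) (A B : Set V)
    (ordB : V → ℕ) : Prop :=
  Set.InjOn ordB B ∧
    ∀ a ∈ A, ∀ b₁ ∈ B, ∀ b₂ ∈ B, ∀ b₃ ∈ B, G.Adj a b₁ → G.Adj a b₃ →
      ordB b₁ ≤ ordB b₂ → ordB b₂ ≤ ordB b₃ → G.Adj a b₂

/-- `ordA` orders `A` by the right endpoints of the neighborhood intervals in `B`: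
it is injective on `A`, and whenever `ordA a ≤ ordA a'`, the right endpoint of the
interval of `a` is at most that of `a'` (i.e. every `G`-neighbor of `a` is `≤_B`
some `G`-neighbor of `a'`). -/
def SimpleGraph.IsRightEndpointOrder {V : Type*} (G : SimpleGraph V) (A B : Set V)
    (ordA ordB : V → ℕ) : Prop :=
  Set.InjOn ordA A ∧
    ∀ a ∈ A, ∀ a' ∈ A, ordA a ≤ ordA a' → ∀ b ∈ B, G.Adj a b →
      ∃ b' ∈ B, G.Adj a' b' ∧ ordB b ≤ ordB b'

/-- `(p 0, …, p (k-1))` is an `(A, b, b')`-path in `G²`: an induced path in `G²`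
with all vertices in `A`, where `b ∈ B` is a `G`-neighbor of exactly the first
vertex and `b' ∈ B` is a `G`-neighbor of exactly the last vertex, `b ≠ b'`. -/
structure SimpleGraph.IsABPath {V : Type*} (G : SimpleGraph V) (A B : Set V)
    (k : ℕ) (p : Fin k → V) (b b' : V) : Prop where
  two_le : 2 ≤ k
  mem_A : ∀ i, p i ∈ A
  inj : Function.Injective p
  induced : ∀ i j : Fin k, (i : ℕ) < (j : ℕ) →
    (G.square.Adj (p i) (p j) ↔ (j : ℕ) = (i : ℕ) + 1)
  b_mem : b ∈ B
  b'_mem : b' ∈ B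
  b_ne : b ≠ b'
  b_first : ∀ i : Fin k, G.Adj (p i) b ↔ (i : ℕ) = 0
  b'_last : ∀ i : Fin k, G.Adj (p i) b' ↔ (i : ℕ) = k - 1

/-- For an `(A, b, b')`-path `P = (a_1, …, a_k)` in the square of a convex bipartite
graph with `a_1 <_A a_k`: (i) if `k = 2` then `N_G(a_1) ∩ N_G(a_2) ⊆ (b, b')`, and if
`k > 2` then `N_G(a_j) ⊆ (b, b')` for all `2 ≤ j ≤ k−1`; (ii) every vertex of
`[b, b']` is a `G`-neighbor of some `a_j`. -/
theorem abPath_interval {V : Type*} (G : SimpleGraph V) (A B : Set V)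
    (ordA ordB : V → ℕ) (hbip : G.IsBipartitionOf A B)
    (hconv : G.IsConvexityOrder A B ordB)
    (hord : G.IsRightEndpointOrder A B ordA ordB)
    (k : ℕ) (hk : 2 ≤ k) (p : Fin k → V) (b b' : V)
    (hP : G.IsABPath A B k p b b')
    (hfirstlast : ordA (p ⟨0, by omega⟩) < ordA (p ⟨k - 1, by omega⟩)) :
    ((k = 2 → ∀ x ∈ B, G.Adj (p ⟨0, by omega⟩) x → G.Adj (p ⟨k - 1, by omega⟩) x →
        ordB b < ordB x ∧ ordB x < ordB b') ∧
      (2 < k → ∀ j : Fin k, 0 < (j : ℕ) → (j : ℕ) < k - 1 →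
        ∀ x ∈ B, G.Adj (p j) x → ordB b < ordB x ∧ ordB x < ordB b')) ∧
    (∀ x ∈ B, ordB b ≤ ordB x → ordB x ≤ ordB b' → ∃ i : Fin k, G.Adj (p i) x) := by
  obtain ⟨hk2', hA, hinj, hind, hbB, hb'B, hbne, hbf, hb'l⟩ := hP
  obtain ⟨hordBinj, hconvex⟩ := hconv
  obtain ⟨hordAinj, hordA⟩ := hord
  obtain ⟨hcover, hdisj, hedge⟩ := hbip
  have hnB : ∀ (i : Fin k) (x : V), G.Adj (p i) x → x ∈ B := by
    intro i x hx
    rcases hedge hx with ⟨_, h⟩ | ⟨h, _⟩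
    · exact h
    · exact absurd h (Set.disjoint_left.mp hdisj (hA i))
  have hnoAA : ∀ (i j : Fin k), ¬ G.Adj (p i) (p j) := by
    intro i j hadj
    rcases hedge hadj with ⟨_, h⟩ | ⟨h, _⟩
    · exact absurd h (Set.disjoint_left.mp hdisj (hA j))
    · exact absurd h (Set.disjoint_left.mp hdisj (hA i))
  have hcomm : ∀ (i : ℕ) (h : i + 1 < k),
      ∃ w, G.Adj (p ⟨i, by omega⟩) w ∧ G.Adj (p ⟨i + 1, h⟩) w := by
    intro i h
    have hsq := (hind ⟨i, by omega⟩ ⟨i + 1, h⟩ (Nat.lt_succ_self i)).mpr rfl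
    obtain ⟨-, hAA | ⟨w, h1, h2⟩⟩ := hsq
    · exact absurd hAA (hnoAA _ _)
    · exact ⟨w, h1, h2.symm⟩
  have hside : ∀ (i : Fin k) (z : V), z ∈ B → ¬ G.Adj (p i) z →
      (∀ w, G.Adj (p i) w → ordB w < ordB z) ∨
      (∀ w, G.Adj (p i) w → ordB z < ordB w) := by
    intro i z hz hnadj
    by_cases h : ∃ w2, G.Adj (p i) w2 ∧ ordB z ≤ ordB w2
    · obtain ⟨w2, hw2, hzw2⟩ := h
      right
      intro w hw
      by_contra hcc
      push_neg at hcc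
      exact hnadj (hconvex (p i) (hA i) w (hnB i w hw) z hz w2 (hnB i w2 hw2) hw hw2 hcc hzw2)
    · left
      intro w hw
      by_contra hcc
      exact h ⟨w, hw, by omega⟩
  have h0adj : G.Adj (p ⟨0, by omega⟩) b := (hbf _).mpr rfl
  have hlastadj : G.Adj (p ⟨k - 1, by omega⟩) b' := (hb'l _).mpr rfl
  have hlastnb : ¬ G.Adj (p ⟨k - 1, by omega⟩) b := by
    intro h
    have h1 : k - 1 = 0 := (hbf _).mp h
    omega
  have h0nb' : ¬ G.Adj (p ⟨0, by omega⟩) b' := by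
    intro h
    have h1 : 0 = k - 1 := (hb'l _).mp h
    omega
  have hblt : ordB b < ordB b' := by
    have hne : ordB b ≠ ordB b' := fun h => hbne (hordBinj hbB hb'B h)
    obtain ⟨c, hcB, hcadj, hbc⟩ :=
      hordA _ (hA _) _ (hA _) (le_of_lt hfirstlast) b hbB h0adj
    by_contra hcc
    push_neg at hcc
    exact hlastnb (hconvex _ (hA _) b' hb'B b hbB c hcB hlastadj hcadj (by omega) hbc)
  have chain_lt : ∀ (z : V), z ∈ B → ∀ (lo m : ℕ) (hm : lo + m < k),
      (∀ (i : ℕ) (hi : i < k), lo ≤ i → i ≤ lo + m → ¬ G.Adj (p ⟨i, hi⟩) z) →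
      (∃ w, G.Adj (p ⟨lo, by omega⟩) w ∧ ordB w < ordB z) →
      ∃ w, G.Adj (p ⟨lo + m, hm⟩) w ∧ ordB w < ordB z := by
    intro z hz lo m
    induction m with
    | zero => intro hm h hw; exact hw
    | succ n ih =>
      intro hm hnadj hw
      have hm' : lo + n < k := by omega
      obtain ⟨w, hw1, hwlt⟩ := ih hm' (fun i hi h1 h2 => hnadj i hi h1 (by omega)) hw
      obtain ⟨c, hc1, hc2⟩ := hcomm (lo + n) (by omega)
      rcases hside ⟨lo + n + 1, by omega⟩ z hz (hnadj _ (by omega) (by omega) (by omega)) with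
        h | h
      · exact ⟨c, hc2, h c hc2⟩
      · rcases hside ⟨lo + n, hm'⟩ z hz (hnadj _ _ (by omega) (by omega)) with h2 | h2
        · exact absurd (h c hc2) (by have := h2 c hc1; omega)
        · exact absurd (h2 w hw1) (by omega)
  have chain_gt : ∀ (z : V), z ∈ B → ∀ (lo m : ℕ) (hm : lo + m < k),
      (∀ (i : ℕ) (hi : i < k), lo ≤ i → i ≤ lo + m → ¬ G.Adj (p ⟨i, hi⟩) z) →
      (∃ w, G.Adj (p ⟨lo + m, hm⟩) w ∧ ordB z < ordB w) →
      ∃ w, G.Adj (p ⟨lo, by omega⟩) w ∧ ordB z < ordB w := by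
    intro z hz lo m
    induction m with
    | zero => intro hm h hw; exact hw
    | succ n ih =>
      intro hm hnadj hw
      have hm' : lo + n < k := by omega
      obtain ⟨w, hw1, hwgt⟩ := hw
      obtain ⟨c, hc1, hc2⟩ := hcomm (lo + n) (by omega)
      rcases hside ⟨lo + n + 1, by omega⟩ z hz (hnadj _ (by omega) (by omega) (by omega)) with
        h | h
      · exact absurd (h w hw1) (by omega)
      · exact ih hm' (fun i hi h1 h2 => hnadj i hi h1 (by omega)) ⟨c, hc1, h c hc2⟩
  refine ⟨⟨?_, ?_⟩, ?_⟩
  · -- k = 2 case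
    intro hk2 x hxB hx0 hx1
    constructor
    · by_contra hcc
      push_neg at hcc
      exact hlastnb (hconvex _ (hA _) x hxB b hbB b' hb'B hx1 hlastadj hcc hblt.le)
    · by_contra hcc
      push_neg at hcc
      exact h0nb' (hconvex _ (hA _) b hbB b' hb'B x hxB h0adj hx0 hblt.le hcc)
  · -- 2 < k case
    intro hk3 j hj0 hj1 x hxB hjx
    have hjb : ¬ G.Adj (p j) b := by
      intro h
      have h1 : (j : ℕ) = 0 := (hbf j).mp h
      omega
    have hjb' : ¬ G.Adj (p j) b' := by
      intro h
      have h1 : (j : ℕ) = k - 1 := (hb'l j).mp h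
      omega
    constructor
    · by_contra hcc
      push_neg at hcc
      have hxb : ordB x < ordB b := by
        rcases lt_or_eq_of_le hcc with h | h
        · exact h
        · exact absurd (by rwa [hordBinj hxB hbB h] at hjx) hjb
      have hm : (j : ℕ) + (k - 1 - (j : ℕ)) < k := by omega
      have hres := chain_lt b hbB (j : ℕ) (k - 1 - (j : ℕ)) hm
        (fun i hi h1 h2 h3 => by have h4 : i = 0 := (hbf ⟨i, hi⟩).mp h3; omega)
        ⟨x, by
          have heq : (⟨(j : ℕ), by omega⟩ : Fin k) = j := Fin.ext rfl
          rw [heq]; exact hjx, hxb⟩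
      obtain ⟨w, hw1, hw2⟩ := hres
      have heq : (⟨(j : ℕ) + (k - 1 - (j : ℕ)), hm⟩ : Fin k) = ⟨k - 1, by omega⟩ :=
        Fin.ext (by simp; omega)
      rw [heq] at hw1
      rcases hside ⟨k - 1, by omega⟩ b hbB hlastnb with h | h
      · have := h b' hlastadj; omega
      · have := h w hw1; omega
    · by_contra hcc
      push_neg at hcc
      have hxb' : ordB b' < ordB x := by
        rcases lt_or_eq_of_le hcc with h | h
        · exact h
        · exact absurd (by rwa [← hordBinj hb'B hxB h] at hjx) hjb'
      have hm : 0 + (j : ℕ) < k := by omega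
      have hres := chain_gt b' hb'B 0 (j : ℕ) hm
        (fun i hi h1 h2 h3 => by have h4 : i = k - 1 := (hb'l ⟨i, hi⟩).mp h3; omega)
        ⟨x, by
          have heq : (⟨0 + (j : ℕ), hm⟩ : Fin k) = j := Fin.ext (by simp)
          rw [heq]; exact hjx, hxb'⟩
      obtain ⟨w, hw1, hw2⟩ := hres
      rcases hside ⟨0, by omega⟩ b' hb'B h0nb' with h | h
      · have := h w hw1; omega
      · have := h b h0adj; omega
  · -- part (ii)
    intro x hxB hbx hxb'
    by_contra hcc
    push_neg at hcc
    have hbx' : ordB b < ordB x := by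
      rcases lt_or_eq_of_le hbx with h | h
      · exact h
      · exact (hcc ⟨0, by omega⟩ (by rwa [hordBinj hbB hxB h] at h0adj)).elim
    have hm : 0 + (k - 1) < k := by omega
    have hres := chain_lt x hxB 0 (k - 1) hm
      (fun i hi h1 h2 => hcc ⟨i, hi⟩)
      ⟨b, h0adj, hbx'⟩
    obtain ⟨w, hw1, hw2⟩ := hres
    have heq : (⟨0 + (k - 1), hm⟩ : Fin k) = ⟨k - 1, by omega⟩ := Fin.ext (by simp)
    rw [heq] at hw1
    rcases hside ⟨k - 1, by omega⟩ x hxB (hcc _) with h | h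
    · have := h b' hlastadj; omega
    · have := h w hw1; omega
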